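/- Let F be a finite field, ε ∈ {1, −1}, and let R ∈ M_n(F) be an invertible matrix whose minimal polynomial f is monic irreducible with deg f > 1 and f = f* (self-dual). Suppose T ∈ M_n(F) is invertible and satisfies Rᵀ = T⁻¹·R⁻¹·T. Then there exists an invertible T₀ ∈ M_n(F) with Rᵀ = T₀⁻¹·R⁻¹·T₀ and T₀ = ε·T₀ᵀ. -/

import Mathlib

open Matrix Polynomial

/-- The dual polynomial `f*(t) = f(0)⁻¹ · t^(deg f) · f(1/t)`. -/
noncomputable def dualPoly {F : Type*} [Field F] (f : Polynomial F) : Polynomial F :=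
  Polynomial.C (f.coeff 0)⁻¹ * f.reverse

set_option maxHeartbeats 2000000 in
/-- Let `R` be an invertible matrix over a finite field whose minimal polynomial is monic
irreducible self-dual of degree `> 1`, let `ε = ±1`, and suppose `Rᵀ = T⁻¹·R⁻¹·T` for some
invertible `T`.  Then `T` may be chosen with `T = ε·Tᵀ`. -/
theorem exists_symmetrized_intertwiner
    {F : Type*} [Field F] [Fintype F] {n : ℕ} (ε : F) (hε : ε = 1 ∨ ε = -1)
    (R : Matrix (Fin n) (Fin n) F) (hR : IsUnit R)
    (hmonic : (minpoly F R).Monic)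
    (hirr : Irreducible (minpoly F R))
    (hdeg : 1 < (minpoly F R).natDegree)
    (hdual : dualPoly (minpoly F R) = minpoly F R)
    (T : Matrix (Fin n) (Fin n) F) (hT : IsUnit T)
    (hTR : Rᵀ = T⁻¹ * R⁻¹ * T) :
    ∃ T₀ : Matrix (Fin n) (Fin n) F, IsUnit T₀ ∧ Rᵀ = T₀⁻¹ * R⁻¹ * T₀ ∧ T₀ = ε • T₀ᵀ := by
  classical
  set f := minpoly F R with hfdef
  have hε2 : ε * ε = 1 := by rcases hε with h | h <;> rw [h] <;> ring
  have hfne : f ≠ 0 := hmonic.ne_zero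
  -- the constant coefficient is nonzero
  have hc0 : f.coeff 0 ≠ 0 := by
    intro h0
    have hX : (X : F[X]) ∣ f := X_dvd_iff.mpr h0
    obtain ⟨g, hg⟩ := hX
    rcases hirr.isUnit_or_isUnit hg with h | h
    · exact Polynomial.not_isUnit_X h
    · have hg0 : g.natDegree = 0 := Polynomial.natDegree_eq_zero_of_isUnit h
      have hgne : g ≠ 0 := by rintro rfl; simp at hg; exact hfne hg
      have : f.natDegree = 1 := by
        rw [hg, Polynomial.natDegree_mul Polynomial.X_ne_zero hgne,
          Polynomial.natDegree_X, hg0]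
      omega
  haveI : Fact (Irreducible f) := ⟨hirr⟩
  set K := AdjoinRoot f with hK
  set x : K := AdjoinRoot.root f with hx
  have hxf : aeval x f = 0 := by
    have := AdjoinRoot.aeval_algHom_eq_zero f (AlgHom.id F K)
    exact this
  have hx0 : x ≠ 0 := by
    intro h
    rw [h, aeval_def, eval₂_at_zero] at hxf
    exact hc0 ((_root_.map_eq_zero (algebraMap F K)).mp hxf)
  -- x⁻¹ is also a root of f, by self-duality
  haveI : Invertible x := invertibleOfNonzero hx0
  have hxinvf : aeval x⁻¹ f = 0 := by
    have h1 : eval₂ (algebraMap F K) (⅟ x) (reverse f) = 0 :=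
      (eval₂_reverse_eq_zero_iff (algebraMap F K) x f).mpr (by rwa [aeval_def] at hxf)
    rw [invOf_eq_inv] at h1
    have h2 : aeval x⁻¹ (dualPoly f) = 0 := by
      rw [dualPoly, _root_.map_mul, aeval_C, aeval_def, h1, mul_zero]
    rwa [hdual] at h2
  -- the involution σ : K → K, x ↦ x⁻¹
  set σ : K →ₐ[F] K := AdjoinRoot.liftAlgHom f (Algebra.ofId F K) x⁻¹ (by rwa [aeval_def] at hxinvf) with hσdef
  have hσx : σ x = x⁻¹ := AdjoinRoot.liftAlgHom_root _ _ _ _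
  have hcomp : σ.comp σ = AlgHom.id F K := by
    apply AdjoinRoot.algHom_ext
    rw [AlgHom.comp_apply]
    show σ (σ x) = x
    rw [hσx, map_inv₀, hσx, inv_inv]
  have hσσ : ∀ t, σ (σ t) = t := fun t => by
    have := congrArg (fun g : K →ₐ[F] K => g t) hcomp
    simpa using this
  -- σ is not the identity
  have hmin : minpoly F x = f := by
    rw [hx, AdjoinRoot.minpoly_root hfne, hmonic.leadingCoeff, inv_one, Polynomial.C_1, mul_one]
  have hxx : x⁻¹ ≠ x := by
    intro hxx
    have hsq : aeval x ((X : F[X]) ^ 2 - 1) = 0 := by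
      have : x * x = 1 := by
        nth_rewrite 1 [← hxx]
        exact inv_mul_cancel₀ hx0
      simp [sq, this]
    have hdvd : f ∣ ((X : F[X]) ^ 2 - 1) := hmin ▸ minpoly.dvd F x hsq
    have hfactor : ((X : F[X]) ^ 2 - 1) = (X - C 1) * (X + C 1) := by rw [Polynomial.C_1]; ring
    have hprime : Prime f := hirr.prime
    rcases hprime.2.2 _ _ (hfactor ▸ hdvd) with h | h
    · have h1 : f.natDegree ≤ 1 := by
        have := Polynomial.natDegree_le_of_dvd h (Polynomial.X_sub_C_ne_zero 1)
        rwa [Polynomial.natDegree_X_sub_C] at this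
      omega
    · have h1 : f.natDegree ≤ 1 := by
        have hne : ((X : F[X]) + C 1) ≠ 0 := by
          have h5 := Polynomial.X_sub_C_ne_zero (-1 : F)
          rwa [map_neg, sub_neg_eq_add] at h5
        have := Polynomial.natDegree_le_of_dvd h hne
        rwa [Polynomial.natDegree_X_add_C] at this
      omega
  -- construct u with σ u = ε u
  set e : K := algebraMap F K ε with hedef
  have he2 : e * e = 1 := by rw [← _root_.map_mul, hε2, _root_.map_one]
  obtain ⟨z, hz⟩ : ∃ z : K, z + e * σ z ≠ 0 := by
    by_contra hcon
    push_neg at hcon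
    have h1 := hcon 1
    rw [_root_.map_one, mul_one] at h1
    have he : e = -1 := by linear_combination h1
    have hid : ∀ t, σ t = t := by
      intro t
      have := hcon t
      rw [he] at this
      linear_combination -this
    exact hxx ((hσx ▸ hid x))
  set u : K := z + e * σ z with hu
  have hu0 : u ≠ 0 := hz
  have hσe : σ e = e := σ.commutes ε
  have hσu : σ u = e * u := by
    rw [hu, map_add, _root_.map_mul, hσσ, hσe, mul_add, ← mul_assoc, he2, one_mul, add_comm]
  -- instances on K
  haveI hKfin : Module.Finite F K := (AdjoinRoot.powerBasis hfne).finite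
  haveI : Algebra.IsAlgebraic F K := Algebra.IsAlgebraic.of_finite F K
  haveI : Algebra.IsSeparable F K := Algebra.IsAlgebraic.isSeparable_of_perfectField
  -- trace is invariant under σ
  have htrσ : ∀ t, Algebra.trace F K (σ t) = Algebra.trace F K t := by
    intro t
    have := Algebra.trace_eq_of_algEquiv
      (AlgEquiv.ofAlgHom σ σ hcomp hcomp) t
    simpa using this
  -- the matrix side: f kills Rᵀ
  set M : Matrix (Fin n) (Fin n) F := Rᵀ with hM
  have hMf : aeval M f = 0 := by
    have h1 : aeval M f = (aeval R f)ᵀ := by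
      rw [aeval_eq_sum_range, aeval_eq_sum_range, Matrix.transpose_sum]
      refine Finset.sum_congr rfl fun i _ => ?_
      rw [Matrix.transpose_smul, Matrix.transpose_pow]
    rw [h1, hfdef, minpoly.aeval, Matrix.transpose_zero]
  set ψ : K →ₐ[F] Matrix (Fin n) (Fin n) F :=
    Ideal.Quotient.liftₐ (Ideal.span {f}) (aeval M)
      (fun g hg => by
        rw [Ideal.mem_span_singleton] at hg
        obtain ⟨q, rfl⟩ := hg
        rw [_root_.map_mul, hMf, zero_mul]) with hψdef
  have hψx : ψ x = M := by
    rw [hψdef, hx]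
    show Ideal.Quotient.liftₐ _ _ _ (Ideal.Quotient.mk _ (X : F[X])) = M
    rw [Ideal.Quotient.liftₐ_apply]
    show aeval M (X : F[X]) = M
    simp
  have hMunit : IsUnit M := (Matrix.isUnit_transpose R).mpr hR
  have hψxinv : ψ x⁻¹ = M⁻¹ := by
    refine (Matrix.inv_eq_left_inv ?_).symm
    rw [← hψx, ← _root_.map_mul, inv_mul_cancel₀ hx0, _root_.map_one]
  -- K-module structure on Fin n → F
  let Φ : K →ₐ[F] Module.End F (Fin n → F) :=
    (Matrix.toLinAlgEquiv' : Matrix (Fin n) (Fin n) F ≃ₐ[F] _).toAlgHom.comp ψ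
  letI : Module K (Fin n → F) := Module.compHom _ Φ.toRingHom
  have hsmul : ∀ (a : K) (v : Fin n → F), a • v = ψ a *ᵥ v := fun a v => rfl
  letI : IsScalarTower F K (Fin n → F) :=
    ⟨fun a b v => by rw [hsmul, _root_.map_smul, Matrix.smul_mulVec, hsmul]⟩
  haveI : Module.Finite K (Fin n → F) := Module.Finite.of_restrictScalars_finite F K _
  let b : Module.Basis (Fin (Module.finrank K (Fin n → F))) K (Fin n → F) :=
    Module.finBasis K (Fin n → F)
  -- the hermitian form `hB` and its `F`-valued trace form `BL`
  let hB : (Fin n → F) →ₗ[F] (Fin n → F) →ₗ[F] K := LinearMap.mk₂ F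
    (fun v w => ∑ i, σ (b.repr v i) * (b.repr w i))
    (fun v v' w => by
      simp only [map_add, Finsupp.add_apply, add_mul]
      rw [Finset.sum_add_distrib])
    (fun a v w => by
      have h1 : b.repr (a • v) = algebraMap F K a • b.repr v := by
        rw [← algebraMap_smul K a v, _root_.map_smul]
      simp only [h1, Finsupp.smul_apply, smul_eq_mul, _root_.map_mul, AlgHom.commutes,
        mul_assoc]
      rw [← Finset.mul_sum, ← Algebra.smul_def])
    (fun v w w' => by
      simp only [map_add, Finsupp.add_apply, mul_add]
      rw [Finset.sum_add_distrib])
    (fun a v w => by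
      have h1 : b.repr (a • w) = algebraMap F K a • b.repr w := by
        rw [← algebraMap_smul K a w, _root_.map_smul]
      simp only [h1, Finsupp.smul_apply, smul_eq_mul]
      simp only [← mul_left_comm (algebraMap F K a)]
      rw [← Finset.mul_sum, ← Algebra.smul_def])
  have hBapp : ∀ v w, hB v w = ∑ i, σ (b.repr v i) * (b.repr w i) := fun v w => rfl
  let tr : K →ₗ[F] F := Algebra.trace F K
  let BL : (Fin n → F) →ₗ[F] (Fin n → F) →ₗ[F] F :=
    LinearMap.compr₂ hB (tr ∘ₗ LinearMap.mulLeft F u)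
  have hBL : ∀ v w, BL v w = Algebra.trace F K (u * hB v w) := fun v w => rfl
  let E : Fin n → (Fin n → F) := fun i k => if i = k then 1 else 0
  let T₀ : Matrix (Fin n) (Fin n) F := Matrix.of fun i j => BL (E i) (E j)
  have hT₀app : ∀ i j, T₀ i j = BL (E i) (E j) := fun i j => rfl
  -- hermitian symmetry
  have hherm : ∀ v w, hB w v = σ (hB v w) := by
    intro v w
    rw [hBapp, hBapp, map_sum]
    refine Finset.sum_congr rfl fun i _ => ?_
    rw [_root_.map_mul, hσσ, mul_comm]
  have hsym : ∀ v w, BL w v = ε * BL v w := by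
    intro v w
    rw [hBL, hBL, hherm]
    have h1 : σ (e * (u * hB v w)) = u * σ (hB v w) := by
      rw [_root_.map_mul, _root_.map_mul, hσe, hσu]
      calc e * (e * u * σ (hB v w)) = (e * e) * (u * σ (hB v w)) := by ring
      _ = u * σ (hB v w) := by rw [he2, one_mul]
    rw [← h1, htrσ, hedef, ← Algebra.smul_def, _root_.map_smul, smul_eq_mul]
  have hTsym : T₀ = ε • T₀ᵀ := by
    ext i j
    rw [Matrix.smul_apply, Matrix.transpose_apply, smul_eq_mul, hT₀app, hT₀app,
      hsym (E i) (E j), ← mul_assoc, hε2, one_mul]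
  -- bilinear expansion of BL through the matrix T₀
  have hexp : ∀ v w, BL v w = v ⬝ᵥ (T₀ *ᵥ w) := by
    intro v w
    conv_lhs => rw [pi_eq_sum_univ v, pi_eq_sum_univ w]
    simp only [map_sum, LinearMap.sum_apply, _root_.map_smul, LinearMap.smul_apply,
      smul_eq_mul]
    simp only [dotProduct, Matrix.mulVec, Finset.mul_sum]
    rw [Finset.sum_comm]
    refine Finset.sum_congr rfl fun i _ => Finset.sum_congr rfl fun j _ => ?_
    rw [hT₀app]
    ring
  -- moving the matrix through the form
  have hσxinv : σ x⁻¹ = x := by rw [map_inv₀, hσx, inv_inv]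
  have hBmove : ∀ v w, BL (M⁻¹ *ᵥ v) w = BL v (M *ᵥ w) := by
    intro v w
    have h1 : M *ᵥ w = x • w := by rw [hsmul, hψx]
    have h2 : M⁻¹ *ᵥ v = x⁻¹ • v := by rw [hsmul, hψxinv]
    rw [h1, h2, hBL, hBL]
    congr 2
    rw [hBapp, hBapp]
    refine Finset.sum_congr rfl fun i _ => ?_
    rw [_root_.map_smul, _root_.map_smul, Finsupp.smul_apply, Finsupp.smul_apply,
      smul_eq_mul, smul_eq_mul, _root_.map_mul, hσxinv]
    ring
  -- the intertwining identity
  have hRinvT : R⁻¹ = (M⁻¹)ᵀ := by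
    rw [hM, Matrix.transpose_nonsing_inv, Matrix.transpose_transpose]
  have hmat : T₀ * M = R⁻¹ * T₀ := by
    ext i j
    have hkey : (E i) ⬝ᵥ ((T₀ * M) *ᵥ (E j)) = (E i) ⬝ᵥ ((R⁻¹ * T₀) *ᵥ (E j)) := by
      rw [← Matrix.mulVec_mulVec, ← Matrix.mulVec_mulVec]
      calc (E i) ⬝ᵥ (T₀ *ᵥ (M *ᵥ (E j))) = BL (E i) (M *ᵥ (E j)) := (hexp _ _).symm
        _ = BL (M⁻¹ *ᵥ (E i)) (E j) := (hBmove _ _).symm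
        _ = (M⁻¹ *ᵥ (E i)) ⬝ᵥ (T₀ *ᵥ (E j)) := hexp _ _
        _ = ((E i) ᵥ* R⁻¹) ⬝ᵥ (T₀ *ᵥ (E j)) := by
            rw [hRinvT, Matrix.vecMul_transpose]
        _ = (E i) ⬝ᵥ (R⁻¹ *ᵥ (T₀ *ᵥ (E j))) := (Matrix.dotProduct_mulVec _ _ _).symm
    have hent : ∀ (A : Matrix (Fin n) (Fin n) F) i j, (E i) ⬝ᵥ (A *ᵥ (E j)) = A i j := by
      intro A i j
      simp [Matrix.mulVec, dotProduct, E, mul_ite, ite_mul,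
        Finset.sum_ite_eq, Finset.sum_ite_eq']
    rw [← hent (T₀ * M) i j, ← hent (R⁻¹ * T₀) i j, hkey]
  -- T₀ is invertible
  have hker : ∀ w, T₀ *ᵥ w = 0 → w = 0 := by
    intro w hw0
    by_contra hwne
    have hrepr : b.repr w ≠ 0 := by
      intro h0
      exact hwne (by simpa using congrArg b.repr.symm h0)
    obtain ⟨i0, hi0⟩ : ∃ i, b.repr w i ≠ 0 := by
      by_contra hnone
      push_neg at hnone
      exact hrepr (Finsupp.ext hnone)
    set c : K := b.repr w i0 with hc
    have huc : u * c ≠ 0 := mul_ne_zero hu0 hi0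
    have hall : ∀ y : K, Algebra.trace F K y = 0 := by
      intro y
      set a : K := σ (y * (u * c)⁻¹) with ha
      have h1 : BL (a • b i0) w = 0 := by
        rw [hexp, hw0, dotProduct_zero]
      have h2 : hB (a • b i0) w = σ a * c := by
        rw [hBapp]
        have h3 : b.repr (a • b i0) = Finsupp.single i0 a := by
          rw [_root_.map_smul, Module.Basis.repr_self, Finsupp.smul_single, smul_eq_mul, mul_one]
        rw [h3]
        rw [Finset.sum_eq_single i0]
        · rw [Finsupp.single_eq_same, hc]
        · intro k _ hk
          rw [Finsupp.single_eq_of_ne hk, map_zero, zero_mul]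
        · intro hnot; exact absurd (Finset.mem_univ i0) hnot
      have h4 : u * (σ a * c) = y := by
        rw [ha, hσσ]
        linear_combination y * mul_inv_cancel₀ huc
      rw [hBL, h2, h4] at h1
      exact h1
    have h5 : (1 : K) = 0 := by
      refine (traceForm_nondegenerate F K).1 1 fun y => ?_
      rw [Algebra.traceForm_apply, one_mul]
      exact hall y
    exact one_ne_zero h5
  have hT₀unit : IsUnit T₀ := by
    rw [← Matrix.mulVec_injective_iff_isUnit]
    intro w1 w2 h12
    have h13 : T₀ *ᵥ (w1 - w2) = 0 := by
      rw [Matrix.mulVec_sub, h12, sub_self]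
    exact sub_eq_zero.mp (hker _ h13)
  -- conclusion
  refine ⟨T₀, hT₀unit, ?_, hTsym⟩
  have hdet : IsUnit T₀.det := (Matrix.isUnit_iff_isUnit_det T₀).mp hT₀unit
  calc M = T₀⁻¹ * T₀ * M := by rw [Matrix.nonsing_inv_mul T₀ hdet, one_mul]
  _ = T₀⁻¹ * (T₀ * M) := by rw [mul_assoc]
  _ = T₀⁻¹ * (R⁻¹ * T₀) := by rw [hmat]
  _ = T₀⁻¹ * R⁻¹ * T₀ := by rw [mul_assoc]
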